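/- Let 1 ≤ r ≤ n−d. The number of integer sequences λ_1 ≥ λ_2 ≥ ⋯ ≥ λ_r ≥ 0 with λ_1 ≤ n−d such that for every i ∈ {1,…,r} either λ_i ≤ i−1 or λ_i ≥ n−d−r+i equals the central binomial coefficient C(2r, r). -/

import Mathlib

section Aux

lemma strictMono_val_le_apply {r N : ℕ} {g : Fin r → Fin N} (hg : StrictMono g) :
    ∀ i : Fin r, i.val ≤ (g i).val := by
  have key : ∀ k : ℕ, ∀ h : k < r, k ≤ (g ⟨k, h⟩).val := by
    intro k
    induction k with
    | zero => intro h; exact Nat.zero_le _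
    | succ k ih =>
      intro h
      have hk : k < r := Nat.lt_of_succ_lt h
      have h1 : g ⟨k, hk⟩ < g ⟨k + 1, h⟩ := hg (by simp [Fin.lt_def])
      have := ih hk
      have := Fin.lt_def.mp h1
      omega
  intro i
  have := key i.val i.isLt
  simpa using this

lemma strictMono_apply_le {r : ℕ} {g : Fin r → Fin (2 * r)} (hg : StrictMono g)
    (i : Fin r) : (g i).val ≤ r + i.val := by
  have hg' : StrictMono (fun j : Fin r => (g j.rev).rev) := by
    intro a b hab
    have h1 : b.rev < a.rev := Fin.rev_lt_rev.mpr hab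
    have h2 : g b.rev < g a.rev := hg h1
    exact Fin.rev_lt_rev.mpr h2
  have := strictMono_val_le_apply hg' i.rev
  simp only [Fin.rev_rev, Fin.val_rev] at this
  have h1 : (g i).val < 2 * r := (g i).isLt
  have h2 : i.val < r := i.isLt
  omega

/-- The set of antitone `l : Fin r → ℕ` bounded by `m` with the gap condition. -/
def Sset (r m : ℕ) : Type :=
  {l : Fin r → ℕ // Antitone l ∧ (∀ i, l i ≤ m) ∧
    ∀ i : Fin r, l i ≤ i.val ∨ m - r + i.val + 1 ≤ l i}

theorem aux15 (r m : ℕ) (hr1 : 1 ≤ r) (hm : r ≤ m) :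
    Nat.card (Sset r m) = Nat.choose (2 * r) r := by
  obtain ⟨r', rfl⟩ : ∃ r', r = r' + 1 := ⟨r - 1, by omega⟩
  set r := r' + 1 with hrdef
  -- Step 1: Sset r m ≃ antitone functions bounded by r
  have e1 : Sset r m ≃ {f : Fin r → ℕ // Antitone f ∧ ∀ i, f i ≤ r} := by
    refine
      { toFun := fun l => ⟨fun i => if l.1 i ≤ i.val then l.1 i else l.1 i - (m - r), ?_, ?_⟩
        invFun := fun f => ⟨fun i => if f.1 i ≤ i.val then f.1 i else f.1 i + (m - r),
          ?_, ?_, ?_⟩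
        left_inv := ?_
        right_inv := ?_ }
    · -- antitone of forward map
      obtain ⟨l, hanti, hbd, hcond⟩ := l
      rw [Fin.antitone_iff_succ_le]
      intro i
      have hle : l i.succ ≤ l i.castSucc := hanti (Fin.castSucc_le_succ i)
      have hc1 := hcond i.castSucc
      have hc2 := hcond i.succ
      have hb1 := hbd i.castSucc
      have hb2 := hbd i.succ
      have hi : i.val < r' := i.isLt
      dsimp only
      simp only [Fin.coe_castSucc, Fin.val_succ] at hc1 hc2 ⊢
      rcases hc1 with hc1 | hc1 <;> rcases hc2 with hc2 | hc2 <;>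
        split_ifs <;> omega
    · -- bound r
      obtain ⟨l, hanti, hbd, hcond⟩ := l
      intro i
      have hb := hbd i
      have hi : i.val < r := i.isLt
      dsimp only
      rcases hcond i with hc | hc <;> split_ifs <;> omega
    · -- antitone of inverse map
      obtain ⟨f, hanti, hbd⟩ := f
      rw [Fin.antitone_iff_succ_le]
      intro i
      have hle : f i.succ ≤ f i.castSucc := hanti (Fin.castSucc_le_succ i)
      have hb1 := hbd i.castSucc
      have hb2 := hbd i.succ
      have hi : i.val < r' := i.isLt
      dsimp only
      simp only [Fin.coe_castSucc, Fin.val_succ]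
      split_ifs <;> omega
    · -- bound m
      obtain ⟨f, hanti, hbd⟩ := f
      intro i
      have hb := hbd i
      have hi : i.val < r := i.isLt
      dsimp only
      split_ifs <;> omega
    · -- gap condition
      obtain ⟨f, hanti, hbd⟩ := f
      intro i
      have hb := hbd i
      have hi : i.val < r := i.isLt
      dsimp
      split_ifs <;> omega
    · -- left inverse
      rintro ⟨l, hanti, hbd, hcond⟩
      apply Subtype.ext
      funext i
      have hc := hcond i
      have hb := hbd i
      have hi : i.val < r := i.isLt
      dsimp only
      rcases hc with hc | hc <;> split_ifs <;> omega
    · -- right inverse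
      rintro ⟨f, hanti, hbd⟩
      apply Subtype.ext
      funext i
      have hb := hbd i
      have hi : i.val < r := i.isLt
      dsimp only
      split_ifs <;> omega
  -- Step 2: antitone bounded functions ≃ strict mono functions into Fin (2r)
  have e2 : {f : Fin r → ℕ // Antitone f ∧ ∀ i, f i ≤ r} ≃
      {g : Fin r → Fin (2 * r) // StrictMono g} := by
    refine
      { toFun := fun f => ⟨fun i => ⟨f.1 i.rev + i.val, ?_⟩, ?_⟩
        invFun := fun g => ⟨fun i => (g.1 i.rev).val - i.rev.val, ?_, ?_⟩
        left_inv := ?_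
        right_inv := ?_ }
    · have := f.2.2 i.rev
      have : i.val < r := i.isLt
      omega
    · obtain ⟨f, hanti, hbd⟩ := f
      rw [Fin.strictMono_iff_lt_succ]
      intro i
      have hrev : i.succ.rev ≤ i.castSucc.rev := Fin.rev_le_rev.mpr (Fin.castSucc_le_succ i)
      have hle : f i.castSucc.rev ≤ f i.succ.rev := hanti hrev
      simp only [Fin.lt_def, Fin.coe_castSucc, Fin.val_succ]
      omega
    · -- antitone of inverse
      obtain ⟨g, hg⟩ := g
      rw [Fin.antitone_iff_succ_le]
      intro i
      have hrev : i.succ.rev < i.castSucc.rev := Fin.rev_lt_rev.mpr Fin.castSucc_lt_succ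
      have hlt : g i.succ.rev < g i.castSucc.rev := hg hrev
      have h1 := Fin.lt_def.mp hlt
      have h2 : i.succ.rev.val + 1 = i.castSucc.rev.val := by
        simp only [Fin.val_rev, Fin.val_succ, Fin.coe_castSucc]
        have : i.val < r' := i.isLt
        omega
      dsimp
      omega
    · -- bound r of inverse
      obtain ⟨g, hg⟩ := g
      intro i
      have h1 := strictMono_apply_le hg i.rev
      dsimp
      simp only [Fin.val_rev] at h1 ⊢
      omega
    · -- left inverse
      rintro ⟨f, hanti, hbd⟩
      apply Subtype.ext
      funext i
      simp only [Fin.rev_rev]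
      omega
    · -- right inverse
      rintro ⟨g, hg⟩
      apply Subtype.ext
      funext i
      apply Fin.ext
      have h1 := strictMono_val_le_apply hg i
      simp only [Fin.rev_rev]
      omega
  -- Step 3: strict mono functions ≃ r-subsets of Fin (2r)
  have e3 : {g : Fin r → Fin (2 * r) // StrictMono g} ≃
      {s : Finset (Fin (2 * r)) // s.card = r} := by
    refine
      { toFun := fun g => ⟨Finset.image g.1 Finset.univ, ?_⟩
        invFun := fun s => ⟨s.1.orderEmbOfFin s.2, (s.1.orderEmbOfFin s.2).strictMono⟩
        left_inv := ?_
        right_inv := ?_ }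
    · rw [Finset.card_image_of_injective _ g.2.injective, Finset.card_univ,
        Fintype.card_fin]
    · rintro ⟨g, hg⟩
      apply Subtype.ext
      funext i
      exact congrFun (Finset.orderEmbOfFin_unique _
        (fun x => Finset.mem_image_of_mem g (Finset.mem_univ x)) hg).symm i
    · rintro ⟨s, hs⟩
      apply Subtype.ext
      ext x
      simp only [Finset.mem_image, Finset.mem_univ, true_and]
      constructor
      · rintro ⟨i, rfl⟩
        exact Finset.orderEmbOfFin_mem s hs i
      · intro hx
        have : x ∈ Set.range (s.orderEmbOfFin hs) := by
          rw [Finset.range_orderEmbOfFin]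
          exact hx
        obtain ⟨i, hi⟩ := this
        exact ⟨i, hi⟩
  rw [Nat.card_congr (e1.trans (e2.trans e3)), Nat.card_eq_fintype_card,
    Fintype.card_finset_len, Fintype.card_fin]

end Aux

theorem stmt15 (n d r : ℕ) (hr1 : 1 ≤ r) (hrd : r ≤ n - d) :
    Nat.card {l : Fin r → ℕ // Antitone l ∧ (∀ i, l i ≤ n - d) ∧
        ∀ i : Fin r, l i ≤ i.val ∨ (n - d) - r + i.val + 1 ≤ l i} =
      Nat.choose (2 * r) r := by
  exact aux15 r (n - d) hr1 hrd
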